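/- Let V = ℂ^N and let ⋀_σ(V) = T(V)/I where I is the two-sided ideal of the tensor algebra T(V) generated by Ker(id_{V⊗V} − σ), with σ the q-braiding above (q not a root of unity). Then ⋀_σ(V) is generated by the images of e₁,…,e_N subject to the relations e_i² = 0 and e_j∧e_i = −q⁻¹ e_i∧e_j for i < j, and the set {e_{i₁}∧⋯∧e_{i_p} : 1 ≤ i₁ < ⋯ < i_p ≤ N, 0 ≤ p ≤ N} is a ℂ-linear basis of ⋀_σ(V). -/

import Mathlib

open TensorProduct
noncomputable section

/-- `V = ℂ^N`. -/
abbrev Vc (N : ℕ) := Fin N → ℂ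

/-- the standard basis vector `e_i`. -/
def ec (N : ℕ) (i : Fin N) : Vc N := Pi.single i 1

/-- the braiding `σ` coming from the `R`-matrix of `U_q(sl_N)`. -/
def qsigma (N : ℕ) (q : ℂ) : Vc N ⊗[ℂ] Vc N →ₗ[ℂ] Vc N ⊗[ℂ] Vc N :=
  ((Pi.basisFun ℂ (Fin N)).tensorProduct (Pi.basisFun ℂ (Fin N))).constr ℂ
    (fun p : Fin N × Fin N =>
      if p.1 = p.2 then ec N p.1 ⊗ₜ[ℂ] ec N p.1
      else if p.1 < p.2 then q⁻¹ • (ec N p.2 ⊗ₜ[ℂ] ec N p.1)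
      else q⁻¹ • (ec N p.2 ⊗ₜ[ℂ] ec N p.1) + (1 - (q⁻¹) ^ 2) • (ec N p.1 ⊗ₜ[ℂ] ec N p.2))

/-- the degree-two inclusion `V ⊗ V → T(V)`, `u ⊗ v ↦ ι(u)·ι(v)`. -/
def degTwo (N : ℕ) : Vc N ⊗[ℂ] Vc N →ₗ[ℂ] TensorAlgebra ℂ (Vc N) :=
  TensorProduct.lift
    ((LinearMap.mul ℂ (TensorAlgebra ℂ (Vc N))).compl₁₂ (TensorAlgebra.ι ℂ) (TensorAlgebra.ι ℂ))

/-- the relation generating the two-sided ideal `I = (Ker (id - σ))`. -/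
def relQ (N : ℕ) (q : ℂ) : TensorAlgebra ℂ (Vc N) → TensorAlgebra ℂ (Vc N) → Prop :=
  fun a b => b = 0 ∧ a ∈ degTwo N '' (LinearMap.ker (LinearMap.id - qsigma N q) : Set (Vc N ⊗[ℂ] Vc N))

/-- the quantum exterior algebra `⋀_σ(V) = T(V)/I`. -/
abbrev QExt (N : ℕ) (q : ℂ) := RingQuot (relQ N q)

/-- the image of `e_i` in `⋀_σ(V)`. -/
def gen (N : ℕ) (q : ℂ) (i : Fin N) : QExt N q :=
  RingQuot.mkAlgHom ℂ (relQ N q) (TensorAlgebra.ι ℂ (ec N i))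

/-- the increasing product `e_{i₁} ∧ ⋯ ∧ e_{i_p}` for `S = {i₁ < ⋯ < i_p}`. -/
def basProd (N : ℕ) (q : ℂ) (S : Finset (Fin N)) : QExt N q :=
  ((S.sort (· ≤ ·)).map (gen N q)).prod

/-! ### Auxiliary development -/

lemma bt (N : ℕ) (i j : Fin N) :
    ((Pi.basisFun ℂ (Fin N)).tensorProduct (Pi.basisFun ℂ (Fin N))) (i, j) = ec N i ⊗ₜ[ℂ] ec N j := by
  simp [Module.Basis.tensorProduct_apply, ec, Pi.basisFun_apply]

lemma qsigma_apply (N : ℕ) (q : ℂ) (i j : Fin N) :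
    qsigma N q (ec N i ⊗ₜ[ℂ] ec N j) =
      if i = j then ec N i ⊗ₜ[ℂ] ec N i
      else if i < j then q⁻¹ • (ec N j ⊗ₜ[ℂ] ec N i)
      else q⁻¹ • (ec N j ⊗ₜ[ℂ] ec N i) + (1 - (q⁻¹) ^ 2) • (ec N i ⊗ₜ[ℂ] ec N j) := by
  rw [qsigma, ← bt, Module.Basis.constr_basis, bt]

lemma degTwo_apply (N : ℕ) (u v : Vc N) :
    degTwo N (u ⊗ₜ[ℂ] v) = TensorAlgebra.ι ℂ u * TensorAlgebra.ι ℂ v := by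
  simp [degTwo]

lemma ker1 (N : ℕ) (q : ℂ) (i : Fin N) :
    ec N i ⊗ₜ[ℂ] ec N i ∈ LinearMap.ker (LinearMap.id - qsigma N q) := by
  simp [LinearMap.mem_ker, LinearMap.sub_apply, qsigma_apply]

lemma ker2 (N : ℕ) (q : ℂ) {i j : Fin N} (hij : i < j) :
    q⁻¹ • (ec N i ⊗ₜ[ℂ] ec N j) + ec N j ⊗ₜ[ℂ] ec N i
      ∈ LinearMap.ker (LinearMap.id - qsigma N q) := by
  have hne : i ≠ j := ne_of_lt hij
  rw [LinearMap.mem_ker, LinearMap.sub_apply, map_add, map_smul, map_add, map_smul,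
    LinearMap.id_apply, LinearMap.id_apply, qsigma_apply, qsigma_apply,
    if_neg hne, if_pos hij, if_neg hne.symm, if_neg (not_lt_of_gt hij)]
  module

lemma gen_sq (N : ℕ) (q : ℂ) (i : Fin N) : gen N q i * gen N q i = 0 := by
  have hrel : relQ N q (degTwo N (ec N i ⊗ₜ[ℂ] ec N i)) 0 := ⟨rfl, ⟨_, ker1 N q i, rfl⟩⟩
  have h := RingQuot.mkAlgHom_rel (S := ℂ) hrel
  rw [degTwo_apply, map_mul, map_zero] at h
  exact h

lemma gen_swap (N : ℕ) (q : ℂ) {i j : Fin N} (hij : i < j) :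
    gen N q j * gen N q i = (-q⁻¹) • (gen N q i * gen N q j) := by
  have hrel : relQ N q (degTwo N (q⁻¹ • (ec N i ⊗ₜ[ℂ] ec N j) + ec N j ⊗ₜ[ℂ] ec N i)) 0 :=
    ⟨rfl, ⟨_, ker2 N q hij, rfl⟩⟩
  have h := RingQuot.mkAlgHom_rel (S := ℂ) hrel
  simp only [map_zero, map_add, map_smul, degTwo_apply, map_mul] at h
  have h2 : q⁻¹ • (gen N q i * gen N q j) + gen N q j * gen N q i = 0 := h
  have h3 := eq_neg_of_add_eq_zero_right h2
  rw [h3]; module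

/-! ### A faithful representation on the free module on `Finset (Fin N)` -/

abbrev W (N : ℕ) := Finset (Fin N) → ℂ

def cf (q : ℂ) {N : ℕ} (i : Fin N) (S : Finset (Fin N)) : ℂ := (-q⁻¹) ^ (S.filter (· < i)).card

def dl (N : ℕ) (S : Finset (Fin N)) : W N := Pi.single S 1

def mu (N : ℕ) (q : ℂ) (i : Fin N) : W N →ₗ[ℂ] W N where
  toFun f T := if i ∈ T then cf q i (T.erase i) * f (T.erase i) else 0
  map_add' f g := by funext T; by_cases h : i ∈ T <;> simp [h, mul_add]
  map_smul' c f := by funext T; by_cases h : i ∈ T <;> simp [h]; ring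

lemma mu_single (N : ℕ) (q : ℂ) (i : Fin N) (S : Finset (Fin N)) :
    mu N q i (dl N S) = if i ∈ S then 0 else cf q i S • dl N (insert i S) := by
  funext T
  by_cases hiS : i ∈ S
  · simp only [mu, LinearMap.coe_mk, AddHom.coe_mk, hiS, if_true]
    by_cases hiT : i ∈ T
    · have : T.erase i ≠ S := fun h => (h ▸ Finset.notMem_erase i T) hiS
      simp [hiT, dl, Pi.single_apply, this]
    · simp [hiT]
  · simp only [mu, LinearMap.coe_mk, AddHom.coe_mk, hiS, if_false]
    by_cases hiT : i ∈ T
    · by_cases hTS : T.erase i = S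
      · have hT : T = insert i S := by rw [← hTS, Finset.insert_erase hiT]
        simp [hTS, dl, Pi.single_apply, hT, hiT, Finset.erase_eq_of_notMem hiS, hiS]
      · have hT : T ≠ insert i S := by
          intro h; apply hTS; rw [h, Finset.erase_insert hiS]
        simp [dl, Pi.single_apply, hTS, hT]
    · have hT : T ≠ insert i S := fun h => hiT (h ▸ Finset.mem_insert_self i S)
      simp [hiT, dl, Pi.single_apply, hT]

lemma cf_insert_lt (q : ℂ) {N : ℕ} {i j : Fin N} (h : i < j) {S : Finset (Fin N)} (hi : i ∉ S) :
    cf q j (insert i S) = (-q⁻¹) * cf q j S := by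
  rw [cf, cf, Finset.filter_insert, if_pos h,
    Finset.card_insert_of_notMem (fun hc => hi (Finset.mem_of_mem_filter i hc)), pow_succ]
  ring

lemma cf_insert_not_lt (q : ℂ) {N : ℕ} {i j : Fin N} (h : ¬ j < i) (S : Finset (Fin N)) :
    cf q i (insert j S) = cf q i S := by
  rw [cf, cf, Finset.filter_insert, if_neg h]

lemma mu_mu_self (N : ℕ) (q : ℂ) (i : Fin N) : mu N q i ∘ₗ mu N q i = 0 := by
  apply (Pi.basisFun ℂ (Finset (Fin N))).ext
  intro S
  have : (Pi.basisFun ℂ (Finset (Fin N))) S = dl N S := by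
    simp [Pi.basisFun_apply, dl]
  rw [this]
  simp only [LinearMap.comp_apply, mu_single, LinearMap.zero_apply]
  by_cases h : i ∈ S
  · simp [h]
  · simp [h, mu_single, Finset.mem_insert_self]

lemma mu_swap (N : ℕ) (q : ℂ) {i j : Fin N} (hij : i < j) :
    mu N q j ∘ₗ mu N q i = (-q⁻¹) • (mu N q i ∘ₗ mu N q j) := by
  apply (Pi.basisFun ℂ (Finset (Fin N))).ext
  intro S
  have hb : (Pi.basisFun ℂ (Finset (Fin N))) S = dl N S := by
    simp [Pi.basisFun_apply, dl]
  rw [hb]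
  have hne : i ≠ j := ne_of_lt hij
  simp only [LinearMap.comp_apply, LinearMap.smul_apply, mu_single]
  by_cases hi : i ∈ S
  · have hi' : i ∈ insert j S := Finset.mem_insert_of_mem hi
    by_cases hj : j ∈ S <;> simp [hi, hj, mu_single, hi']
  · by_cases hj : j ∈ S
    · have hj' : j ∈ insert i S := Finset.mem_insert_of_mem hj
      simp [hi, hj, mu_single, hj']
    · have hji : j ∉ insert i S := by
        simp [Finset.mem_insert, hj, hne.symm]
      have hij' : i ∉ insert j S := by
        simp [Finset.mem_insert, hi, hne]
      simp only [hi, hj, if_false, map_smul, mu_single, hji, hij', if_false]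
      rw [cf_insert_lt q hij hi, cf_insert_not_lt q (not_lt_of_gt hij)]
      rw [Finset.insert_comm]
      rw [smul_smul, smul_smul, smul_smul]
      ring_nf

def muV (N : ℕ) (q : ℂ) : Vc N →ₗ[ℂ] Module.End ℂ (W N) :=
  (Pi.basisFun ℂ (Fin N)).constr ℂ (mu N q)

lemma muV_ec (N : ℕ) (q : ℂ) (i : Fin N) : muV N q (ec N i) = mu N q i := by
  have : ec N i = (Pi.basisFun ℂ (Fin N)) i := by simp [ec, Pi.basisFun_apply]
  rw [muV, this, Module.Basis.constr_basis]

def Phi0 (N : ℕ) (q : ℂ) : TensorAlgebra ℂ (Vc N) →ₐ[ℂ] Module.End ℂ (W N) :=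
  TensorAlgebra.lift ℂ (muV N q)

def Psi (N : ℕ) (q : ℂ) : Vc N ⊗[ℂ] Vc N →ₗ[ℂ] Module.End ℂ (W N) :=
  ((Pi.basisFun ℂ (Fin N)).tensorProduct (Pi.basisFun ℂ (Fin N))).constr ℂ
    (fun p : Fin N × Fin N => if p.1 < p.2 then mu N q p.1 ∘ₗ mu N q p.2 else 0)

lemma Psi_apply (N : ℕ) (q : ℂ) (i j : Fin N) :
    Psi N q (ec N i ⊗ₜ[ℂ] ec N j) = if i < j then mu N q i ∘ₗ mu N q j else 0 := by
  rw [Psi, ← bt, Module.Basis.constr_basis]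

lemma factor (N : ℕ) (q : ℂ) :
    (Phi0 N q).toLinearMap ∘ₗ degTwo N = Psi N q ∘ₗ (LinearMap.id - qsigma N q) := by
  apply ((Pi.basisFun ℂ (Fin N)).tensorProduct (Pi.basisFun ℂ (Fin N))).ext
  rintro ⟨i, j⟩
  rw [bt]
  have hL : (Phi0 N q).toLinearMap (degTwo N (ec N i ⊗ₜ[ℂ] ec N j)) = mu N q i ∘ₗ mu N q j := by
    rw [degTwo_apply]
    simp only [AlgHom.toLinearMap_apply, map_mul, Phi0, TensorAlgebra.lift_ι_apply, muV_ec]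
    rfl
  rw [LinearMap.comp_apply, LinearMap.comp_apply, hL, LinearMap.sub_apply, LinearMap.id_apply,
    qsigma_apply]
  rcases lt_trichotomy i j with h | h | h
  · rw [if_neg (ne_of_lt h), if_pos h, map_sub, map_smul, Psi_apply, Psi_apply,
      if_pos h, if_neg (not_lt_of_gt h)]
    simp
  · subst h
    rw [if_pos rfl, sub_self, map_zero, mu_mu_self]
  · rw [if_neg (ne_of_gt h), if_neg (not_lt_of_gt h), map_sub, map_add, map_smul, map_smul,
      Psi_apply, Psi_apply, if_neg (not_lt_of_gt h), if_pos h, mu_swap N q h]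
    module

lemma Phi0_resp (N : ℕ) (q : ℂ) : ∀ ⦃a b⦄, relQ N q a b → Phi0 N q a = Phi0 N q b := by
  rintro a b ⟨rfl, x, hx, rfl⟩
  have h := LinearMap.congr_fun (factor N q) x
  rw [LinearMap.comp_apply, LinearMap.comp_apply, LinearMap.mem_ker.mp hx, map_zero] at h
  rw [map_zero]
  exact h

def PhiA (N : ℕ) (q : ℂ) : QExt N q →ₐ[ℂ] Module.End ℂ (W N) :=
  RingQuot.liftAlgHom ℂ ⟨Phi0 N q, Phi0_resp N q⟩

lemma PhiA_gen (N : ℕ) (q : ℂ) (i : Fin N) : PhiA N q (gen N q i) = mu N q i := by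
  rw [gen, PhiA, RingQuot.liftAlgHom_mkAlgHom_apply, Phi0, TensorAlgebra.lift_ι_apply, muV_ec]

lemma cf_one (q : ℂ) {N : ℕ} {i : Fin N} {S : Finset (Fin N)} (h : ∀ j ∈ S, i < j) :
    cf q i S = 1 := by
  have : S.filter (· < i) = ∅ := by
    rw [Finset.filter_eq_empty_iff]
    exact fun {j} hj => not_lt_of_gt (h j hj)
  rw [cf, this]
  simp

lemma prod_delta (N : ℕ) (q : ℂ) (l : List (Fin N)) (hl : l.Pairwise (· < ·)) :
    PhiA N q ((l.map (gen N q)).prod) (dl N ∅) = dl N l.toFinset := by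
  induction l with
  | nil => simp
  | cons a l ih =>
    rw [List.map_cons, List.prod_cons, map_mul]
    have htail : l.Pairwise (· < ·) := (List.pairwise_cons.mp hl).2
    have hhead : ∀ b ∈ l, a < b := (List.pairwise_cons.mp hl).1
    rw [Module.End.mul_apply, ih htail, PhiA_gen, mu_single]
    have ha : a ∉ l.toFinset := by
      simp only [List.mem_toFinset]
      exact fun hc => lt_irrefl a (hhead a hc)
    rw [if_neg ha, cf_one q (fun j hj => hhead j (List.mem_toFinset.mp hj))]
    rw [List.toFinset_cons, one_smul]

lemma PhiA_basProd (N : ℕ) (q : ℂ) (S : Finset (Fin N)) :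
    PhiA N q (basProd N q S) (dl N ∅) = dl N S := by
  rw [basProd, prod_delta N q _ (Finset.sortedLT_sort S).pairwise, Finset.sort_toFinset]

/-! ### Spanning -/

lemma basProd_empty (N : ℕ) (q : ℂ) : basProd N q ∅ = 1 := by simp [basProd]

lemma basProd_insert (N : ℕ) (q : ℂ) {i : Fin N} {S : Finset (Fin N)}
    (h : ∀ j ∈ S, i < j) (hi : i ∉ S) :
    basProd N q (insert i S) = gen N q i * basProd N q S := by
  rw [basProd, Finset.sort_insert _ (fun b hb => le_of_lt (h b hb)) hi, List.map_cons,
    List.prod_cons, basProd]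

lemma basProd_singleton (N : ℕ) (q : ℂ) (i : Fin N) : basProd N q {i} = gen N q i := by
  have : ({i} : Finset (Fin N)) = insert i ∅ := rfl
  rw [this, basProd_insert N q (by simp) (by simp), basProd_empty, mul_one]

lemma key (N : ℕ) (q : ℂ) (n : ℕ) : ∀ S : Finset (Fin N), S.card ≤ n → ∀ i : Fin N,
    gen N q i * basProd N q S
      ∈ Submodule.span ℂ (basProd N q '' {T | T ⊆ insert i S}) := by
  induction n with
  | zero =>
    intro S hS i
    rw [Finset.card_eq_zero.mp (Nat.le_zero.mp hS), basProd_empty, mul_one]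
    exact Submodule.subset_span ⟨{i}, by simp [Finset.singleton_subset_iff], basProd_singleton N q i⟩
  | succ n IH =>
    intro S hS i
    rcases Finset.eq_empty_or_nonempty S with rfl | hne
    · rw [basProd_empty, mul_one]
      exact Submodule.subset_span ⟨{i}, by simp [Finset.singleton_subset_iff],
        basProd_singleton N q i⟩
    set m := S.min' hne with hm
    have hmS : m ∈ S := S.min'_mem hne
    have hdec : basProd N q S = gen N q m * basProd N q (S.erase m) := by
      have h1 : ∀ j ∈ S.erase m, m < j := by
        intro j hj
        exact lt_of_le_of_ne (S.min'_le j (Finset.mem_of_mem_erase hj))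
          (Ne.symm (Finset.ne_of_mem_erase hj))
      rw [← basProd_insert N q h1 (Finset.notMem_erase m S), Finset.insert_erase hmS]
    rcases lt_trichotomy i m with hlt | heq | hgt
    · have h1 : ∀ j ∈ S, i < j := fun j hj => lt_of_lt_of_le hlt (S.min'_le j hj)
      have hiS : i ∉ S := fun hc => lt_irrefl i (h1 i hc)
      rw [← basProd_insert N q h1 hiS]
      exact Submodule.subset_span ⟨insert i S, Set.mem_setOf.mpr subset_rfl, rfl⟩
    · rw [hdec, heq, ← mul_assoc, gen_sq, zero_mul]
      exact Submodule.zero_mem _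
    · have hcard : (S.erase m).card ≤ n := by
        rw [Finset.card_erase_of_mem hmS]
        omega
      have hIH := IH (S.erase m) hcard i
      have hcomap : Submodule.span ℂ (basProd N q '' {T | T ⊆ insert i (S.erase m)})
          ≤ Submodule.comap (LinearMap.mulLeft ℂ (gen N q m))
            (Submodule.span ℂ (basProd N q '' {T | T ⊆ insert i S})) := by
        rw [Submodule.span_le]
        rintro _ ⟨T, hT, rfl⟩
        simp only [SetLike.mem_coe, Submodule.mem_comap, LinearMap.mulLeft_apply]
        have hmT : ∀ j ∈ T, m < j := by
          intro j hj
          rcases Finset.mem_insert.mp (hT hj) with rfl | hj'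
          · exact hgt
          · exact lt_of_le_of_ne (S.min'_le j (Finset.mem_of_mem_erase hj'))
              (Ne.symm (Finset.ne_of_mem_erase hj'))
        have hmT' : m ∉ T := fun hc => lt_irrefl m (hmT m hc)
        rw [← basProd_insert N q hmT hmT']
        refine Submodule.subset_span ⟨insert m T, ?_, rfl⟩
        intro x hx
        rcases Finset.mem_insert.mp hx with rfl | hx'
        · exact Finset.mem_insert_of_mem hmS
        · rcases Finset.mem_insert.mp (hT hx') with rfl | hx''
          · exact Finset.mem_insert_self x S
          · exact Finset.mem_insert_of_mem (Finset.mem_of_mem_erase hx'')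
      have hmem := hcomap hIH
      simp only [Submodule.mem_comap, LinearMap.mulLeft_apply] at hmem
      have hrw : gen N q i * basProd N q S
          = (-q⁻¹) • (gen N q m * (gen N q i * basProd N q (S.erase m))) := by
        rw [hdec, ← mul_assoc, gen_swap N q hgt, smul_mul_assoc, mul_assoc]
      rw [hrw]
      exact Submodule.smul_mem _ _ hmem

lemma keyP (N : ℕ) (q : ℂ) (i : Fin N) (S : Finset (Fin N)) :
    gen N q i * basProd N q S ∈ Submodule.span ℂ (Set.range (basProd N q)) :=
  Submodule.span_mono (Set.image_subset_range _ _) (key N q S.card S le_rfl i)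

lemma genMulP (N : ℕ) (q : ℂ) (g : Fin N) {x : QExt N q}
    (hx : x ∈ Submodule.span ℂ (Set.range (basProd N q))) :
    gen N q g * x ∈ Submodule.span ℂ (Set.range (basProd N q)) := by
  have h : Submodule.span ℂ (Set.range (basProd N q))
      ≤ Submodule.comap (LinearMap.mulLeft ℂ (gen N q g))
        (Submodule.span ℂ (Set.range (basProd N q))) := by
    rw [Submodule.span_le]
    rintro _ ⟨S, rfl⟩
    exact keyP N q g S
  exact h hx

lemma listMulP (N : ℕ) (q : ℂ) (l : List (Fin N)) {x : QExt N q}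
    (hx : x ∈ Submodule.span ℂ (Set.range (basProd N q))) :
    (l.map (gen N q)).prod * x ∈ Submodule.span ℂ (Set.range (basProd N q)) := by
  induction l with
  | nil => simpa using hx
  | cons a l ih =>
    rw [List.map_cons, List.prod_cons, mul_assoc]
    exact genMulP N q a ih

lemma mulP (N : ℕ) (q : ℂ) {x y : QExt N q}
    (hx : x ∈ Submodule.span ℂ (Set.range (basProd N q)))
    (hy : y ∈ Submodule.span ℂ (Set.range (basProd N q))) :
    x * y ∈ Submodule.span ℂ (Set.range (basProd N q)) := by
  have h : Submodule.span ℂ (Set.range (basProd N q))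
      ≤ Submodule.comap (LinearMap.mulRight ℂ y)
        (Submodule.span ℂ (Set.range (basProd N q))) := by
    rw [Submodule.span_le]
    rintro _ ⟨S, rfl⟩
    simp only [SetLike.mem_coe, Submodule.mem_comap, LinearMap.mulRight_apply]
    rw [basProd]
    exact listMulP N q _ hy
  have := h hx
  simpa only [Submodule.mem_comap, LinearMap.mulRight_apply] using this

lemma adjoin_gen_top (N : ℕ) (q : ℂ) : Algebra.adjoin ℂ (Set.range (gen N q)) = ⊤ := by
  have h1 : Algebra.adjoin ℂ (Set.range fun i => TensorAlgebra.ι ℂ (ec N i)) = ⊤ := by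
    rw [eq_top_iff]
    rintro x -
    induction x using TensorAlgebra.induction with
    | algebraMap r => exact Subalgebra.algebraMap_mem _ r
    | ι v =>
      have hv : (TensorAlgebra.ι ℂ (M := Vc N)) v = ∑ i, v i • TensorAlgebra.ι ℂ (ec N i) := by
        have h : v = ∑ i, v i • ec N i := by
          conv_lhs => rw [← Finset.univ_sum_single v]
          refine Finset.sum_congr rfl fun i _ => ?_
          rw [ec, ← Pi.single_smul, smul_eq_mul, mul_one]
        conv_lhs => rw [h]
        rw [map_sum]
        simp only [map_smul]
      rw [hv]
      exact Subalgebra.sum_mem _ (fun i _ =>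
        Subalgebra.smul_mem _ (Algebra.subset_adjoin (Set.mem_range_self i)) _)
    | mul a b ha hb => exact mul_mem ha hb
    | add a b ha hb => exact add_mem ha hb
  have h2 : Set.range (gen N q)
      = (RingQuot.mkAlgHom ℂ (relQ N q)) '' (Set.range fun i => TensorAlgebra.ι ℂ (ec N i)) := by
    rw [← Set.range_comp]
    rfl
  rw [h2, ← AlgHom.map_adjoin, h1, Algebra.map_top]
  exact (AlgHom.range_eq_top _).mpr (RingQuot.mkAlgHom_surjective ℂ _)

def evAt (N : ℕ) : Module.End ℂ (W N) →ₗ[ℂ] W N where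
  toFun f := f (dl N ∅)
  map_add' f g := rfl
  map_smul' c f := rfl

theorem stmt11 (N : ℕ) (q : ℂ) (hq : q ≠ 0) (hroot : ∀ n : ℕ, 0 < n → q ^ n ≠ 1) :
    (∀ i : Fin N, gen N q i * gen N q i = 0) ∧
    (∀ i j : Fin N, i < j → gen N q j * gen N q i = (-q⁻¹) • (gen N q i * gen N q j)) ∧
    Algebra.adjoin ℂ (Set.range (gen N q)) = ⊤ ∧
    LinearIndependent ℂ (basProd N q) ∧
    Submodule.span ℂ (Set.range (basProd N q)) = ⊤ := by
  refine ⟨gen_sq N q, fun i j h => gen_swap N q h, adjoin_gen_top N q, ?_, ?_⟩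
  · -- linear independence
    have hli : LinearIndependent ℂ (dl N) := by
      have h := (Pi.basisFun ℂ (Finset (Fin N))).linearIndependent
      have he : (Pi.basisFun ℂ (Finset (Fin N)) : Finset (Fin N) → W N) = dl N := by
        funext S
        simp [Pi.basisFun_apply, dl]
      rwa [he] at h
    refine LinearIndependent.of_comp (evAt N ∘ₗ (PhiA N q).toLinearMap) ?_
    have he : ((evAt N ∘ₗ (PhiA N q).toLinearMap) ∘ basProd N q) = dl N := by
      funext S
      show PhiA N q (basProd N q S) (dl N ∅) = dl N S
      exact PhiA_basProd N q S
    rwa [he]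
  · -- spanning
    rw [eq_top_iff]
    intro x _
    have h1 : (1 : QExt N q) ∈ Submodule.span ℂ (Set.range (basProd N q)) := by
      rw [← basProd_empty N q]
      exact Submodule.subset_span (Set.mem_range_self ∅)
    let A : Subalgebra ℂ (QExt N q) :=
      Submodule.toSubalgebra (Submodule.span ℂ (Set.range (basProd N q))) h1
        (fun x y hx hy => mulP N q hx hy)
    have hsub : Set.range (gen N q) ⊆ A := by
      rintro _ ⟨i, rfl⟩
      show gen N q i ∈ Submodule.span ℂ (Set.range (basProd N q))
      rw [← basProd_singleton N q i]
      exact Submodule.subset_span (Set.mem_range_self {i})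
    have hx : x ∈ Algebra.adjoin ℂ (Set.range (gen N q)) := by
      rw [adjoin_gen_top N q]; trivial
    exact Algebra.adjoin_le hsub hx
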